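/- (Line-separable property, Lemma 3.1.) Let P be a finite set of points in the plane in convex position, with radii r_p ≥ 0, and let S be a dominating set of the disk graph G(P) of minimum cardinality. Then there exist a partition 𝒜 = ⟨α_1,…,α_m⟩ of P into nonempty sublists listed counterclockwise and an assignment φ : 𝒜 → S (i.e., for every α ∈ 𝒜 and every q ∈ α, the disks D_q and D_{φ(α)} intersect) such that: φ is line-separable, i.e., for all distinct p, q ∈ S the point sets 𝒜_p = ∪{α : φ(α)=p} and 𝒜_q = ∪{α : φ(α)=q} are line-separable; (1) for every p ∈ S, p belongs to a sublist α with φ(α) = p; and (2) any two cyclically adjacent sublists of 𝒜 are assigned to different points of S. -/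

import Mathlib

set_option maxHeartbeats 1000000


noncomputable section

/-- The plane ℝ². -/
abbrev Plane : Type := EuclideanSpace ℝ (Fin 2)

/-- Two point sets `A` and `B` are line-separable: there is a nonzero linear functional
`u` and a constant `c` with `u ≤ c` on `A` and `u ≥ c` on `B`. -/
def LineSep (A B : Set Plane) : Prop :=
  ∃ u : Plane →ₗ[ℝ] ℝ, u ≠ 0 ∧ ∃ c : ℝ, (∀ a ∈ A, u a ≤ c) ∧ (∀ b ∈ B, c ≤ u b)

/-- The planar cross product (signed area determinant). -/
def det2 (u v : Plane) : ℝ := u 0 * v 1 - u 1 * v 0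

/-- `p : ZMod n → Plane` lists points in convex position in counterclockwise order:
every point other than `p i` and `p (i+1)` lies strictly to the left of the directed
line from `p i` to `p (i+1)`. -/
def CCWConvex {n : ℕ} (p : ZMod n → Plane) : Prop :=
  ∀ i j : ZMod n, j ≠ i → j ≠ i + 1 →
    0 < det2 (p (i + 1) - p i) (p j - p i)

def dot2 (u v : Plane) : ℝ := u 0 * v 0 + u 1 * v 1


lemma det2_sub_sub (A B C : Plane) :
    det2 (C - B) (A - B) = det2 (B - A) (C - A) := by
  simp only [det2, PiLp.sub_apply]; ring

lemma det2_swap (u v : Plane) : det2 u v = - det2 v u := by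
  simp only [det2]; ring

/-- det2 as a linear functional in the second argument. -/
def detL (v : Plane) : Plane →ₗ[ℝ] ℝ where
  toFun x := det2 v x
  map_add' x y := by simp only [det2, PiLp.add_apply]; ring
  map_smul' t x := by simp only [det2, PiLp.smul_apply, smul_eq_mul, RingHom.id_apply]; ring

lemma detL_apply (v x : Plane) : detL v x = det2 v x := rfl

lemma detL_ne_zero {v : Plane} (hv : v ≠ 0) : detL v ≠ 0 := by
  have h01 : v 0 ≠ 0 ∨ v 1 ≠ 0 := by
    by_contra h
    push_neg at h
    apply hv
    ext i
    fin_cases i <;> simp [h.1, h.2]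
  intro h
  have h0 : ∀ x : Plane, det2 v x = 0 := fun x => by
    have := congrFun (congrArg DFunLike.coe h) x
    simpa [detL_apply] using this
  -- evaluate at the rotation of v
  set w : Plane := (WithLp.equiv 2 (Fin 2 → ℝ)).symm ![-(v 1), v 0] with hw
  have hw0 : w 0 = -(v 1) := rfl
  have hw1 : w 1 = v 0 := rfl
  have := h0 w
  rw [det2, hw0, hw1] at this
  rcases h01 with h' | h'
  · have := mul_self_pos.mpr h'; nlinarith [mul_self_nonneg (v 0), mul_self_nonneg (v 1)]
  · have := mul_self_pos.mpr h'; nlinarith [mul_self_nonneg (v 0), mul_self_nonneg (v 1)]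

lemma collinear_of_det2 {v w : Plane} (h : det2 v w = 0) (hv : v ≠ 0) :
    ∃ μ : ℝ, w = μ • v := by
  have h01 : v 0 ≠ 0 ∨ v 1 ≠ 0 := by
    by_contra hc
    push_neg at hc
    exact hv (PiLp.ext fun i => by fin_cases i <;> simp [hc.1, hc.2])
  rw [det2] at h
  rcases h01 with h' | h'
  · refine ⟨w 0 / v 0, PiLp.ext fun i => ?_⟩
    fin_cases i <;> simp [PiLp.smul_apply, smul_eq_mul] <;> field_simp <;> linarith
  · refine ⟨w 1 / v 1, PiLp.ext fun i => ?_⟩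
    fin_cases i <;> simp [PiLp.smul_apply, smul_eq_mul] <;> field_simp <;> linarith

lemma det2_dot_identity (e v w : Plane) :
    dot2 e e * det2 v w = dot2 e v * det2 e w - det2 e v * dot2 e w := by
  simp only [det2, dot2]; ring

lemma dot2_self_pos_of_det2 {e w : Plane} (h : det2 e w ≠ 0) : 0 < dot2 e e := by
  by_contra hE
  push_neg at hE
  apply h
  rw [dot2] at hE
  have e0 : e 0 = 0 := by nlinarith [mul_self_nonneg (e 0), mul_self_nonneg (e 1)]
  have e1 : e 1 = 0 := by nlinarith [mul_self_nonneg (e 0), mul_self_nonneg (e 1)]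
  simp [det2, e0, e1]

lemma zmod_cast_ne_zero {n : ℕ} [NeZero n] {o : ℕ} (h1 : 0 < o) (h2 : o < n) :
    (o : ZMod n) ≠ 0 := by
  intro h
  have := ZMod.val_cast_of_lt h2
  rw [h, ZMod.val_zero] at this
  omega

lemma zmod_cast_ne_one {n : ℕ} [NeZero n] {o : ℕ} (hn : 1 < n) (h1 : o ≠ 1) (h2 : o < n) :
    (o : ZMod n) ≠ 1 := by
  intro h
  have h' : ((o : ℕ) : ZMod n) = ((1 : ℕ) : ZMod n) := by simpa using h
  have := ZMod.val_cast_of_lt h2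
  rw [h', ZMod.val_cast_of_lt hn] at this
  omega


lemma tri {n : ℕ} [NeZero n] {p : ZMod n → Plane} (hccw : CCWConvex p)
    (β : ZMod n) {o1 o2 : ℕ} (h1 : 1 ≤ o1) (h12 : o1 < o2) (h2 : o2 ≤ n - 1) :
    0 < det2 (p (β + (o1 : ZMod n)) - p β) (p (β + (o2 : ZMod n)) - p β) := by
  have hn3 : 3 ≤ n := by omega
  have hn1 : 1 < n := by omega
  set v : ℕ → Plane := fun o => p (β + (o : ZMod n)) - p β with hv
  have bpos : ∀ o : ℕ, 2 ≤ o → o ≤ n - 1 → 0 < det2 (v 1) (v o) := by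
    intro o ho2 hon
    have hne0 : β + (o : ZMod n) ≠ β := by
      intro h
      have h' := add_left_cancel (a := β) (by rw [h, add_zero] : β + (o : ZMod n) = β + 0)
      exact zmod_cast_ne_zero (o := o) (by omega) (by omega) h'
    have hne1 : β + (o : ZMod n) ≠ β + 1 := by
      intro h
      exact zmod_cast_ne_one (o := o) hn1 (by omega) (by omega) (add_left_cancel h)
    have h := hccw β (β + (o : ZMod n)) hne0 hne1
    simp only [hv]
    rw [Nat.cast_one]
    exact h
  have consec : ∀ o : ℕ, 1 ≤ o → o + 1 ≤ n - 1 → 0 < det2 (v o) (v (o + 1)) := by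
    intro o ho h1'
    have hne0 : β ≠ β + (o : ZMod n) := by
      intro h
      have h' := add_left_cancel (by rw [← h, add_zero] : β + 0 = β + (o : ZMod n))
      exact zmod_cast_ne_zero (o := o) (by omega) (by omega) h'.symm
    have hne1 : β ≠ β + (o : ZMod n) + 1 := by
      intro h
      have h' : β + ((o + 1 : ℕ) : ZMod n) = β + 0 := by
        push_cast
        rw [add_zero, ← add_assoc]
        exact h.symm
      exact zmod_cast_ne_zero (o := o + 1) (by omega) (by omega) (add_left_cancel h')
    have h := hccw (β + (o : ZMod n)) β hne0 hne1
    rw [det2_sub_sub] at h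
    have hco : β + ((o + 1 : ℕ) : ZMod n) = β + (o : ZMod n) + 1 := by
      push_cast; rw [add_assoc]
    simp only [hv]
    rw [hco]
    exact h
  rcases eq_or_lt_of_le h1 with h1e | h1t
  · have := bpos o2 (by omega) h2
    simpa [hv, ← h1e] using this
  · -- 2 ≤ o1
    have key : ∀ o : ℕ, o1 + 1 ≤ o → o ≤ n - 1 → 0 < det2 (v o1) (v o) := by
      intro o
      induction o with
      | zero => omega
      | succ k ih =>
        intro hk hkn
        rcases eq_or_lt_of_le hk with hke | hkt
        · have := consec o1 h1 (by omega)
          rwa [← hke]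
        · have hIH := ih (by omega) (by omega)
          have hc := consec k (by omega) (by omega)
          set e := v 1 with he
          have hb1 : 0 < det2 e (v o1) := bpos o1 (by omega) (by omega)
          have hb2 : 0 < det2 e (v k) := bpos k (by omega) (by omega)
          have hb3 : 0 < det2 e (v (k + 1)) := bpos (k + 1) (by omega) (by omega)
          have hE : 0 < dot2 e e := dot2_self_pos_of_det2 (ne_of_gt hb1)
          have hI1 : 0 < dot2 e (v o1) * det2 e (v k) - det2 e (v o1) * dot2 e (v k) := by
            have := mul_pos hE hIH
            rwa [det2_dot_identity] at this
          have hI2 : 0 < dot2 e (v k) * det2 e (v (k + 1)) - det2 e (v k) * dot2 e (v (k + 1)) := by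
            have := mul_pos hE hc
            rwa [det2_dot_identity] at this
          have hEX : 0 < dot2 e e * det2 (v o1) (v (k + 1)) := by
            rw [det2_dot_identity]
            nlinarith [mul_pos hI1 hb3, mul_pos hI2 hb1]
          by_contra hng
          push_neg at hng
          have := mul_nonpos_of_nonneg_of_nonpos hE.le hng
          linarith
    exact key o2 (by omega) h2

lemma det2_self (v : Plane) : det2 v v = 0 := by simp only [det2]; ring
lemma det2_right_add (v a b : Plane) : det2 v (a + b) = det2 v a + det2 v b := by
  simp only [det2, PiLp.add_apply]; ring
lemma det2_right_sub (v a b : Plane) : det2 v (a - b) = det2 v a - det2 v b := by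
  simp only [det2, PiLp.sub_apply]; ring
lemma det2_right_smul (v : Plane) (t : ℝ) (a : Plane) : det2 v (t • a) = t * det2 v a := by
  simp only [det2, PiLp.smul_apply, smul_eq_mul]; ring
lemma det2_neg_left (a b : Plane) : det2 (-a) b = - det2 a b := by
  simp only [det2, PiLp.neg_apply]; ring
lemma det2_first_shift (X Y W : Plane) : det2 (X - Y) (Y - W) = det2 (X - W) (Y - W) := by
  simp only [det2, PiLp.sub_apply]; ring
lemma det2_zero_right (v : Plane) : det2 v 0 = 0 := by
  simp only [det2]
  norm_num [PiLp.zero_apply]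


lemma det2_of_mem_segment {a b x : Plane} (h : x ∈ segment ℝ a b) :
    det2 (b - a) (x - a) = 0 := by
  obtain ⟨u, v, hu, hv, huv, rfl⟩ := h
  have hu' : u = 1 - v := by linarith
  subst hu'
  have : (1 - v) • a + v • b - a = v • (b - a) := by module
  rw [this, det2_right_smul, det2_self, mul_zero]

set_option maxHeartbeats 1000000 in
/-- Sum of one pair of opposite sides of a strictly convex quadrilateral is less
than the sum of its diagonals. -/
lemma quad (W X Y Z : Plane)
    (h1 : 0 < det2 (X - W) (Y - W)) (h2 : 0 < det2 (X - W) (Z - W))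
    (h3 : 0 < det2 (Y - W) (Z - W)) (h4 : 0 < det2 (Y - X) (Z - X)) :
    dist W X + dist Y Z < dist W Y + dist X Z := by
  have hAB : 0 < det2 (X - W) (Y - W) + det2 (Y - W) (Z - W) := by linarith
  set t : ℝ := det2 (X - W) (Y - W) / (det2 (X - W) (Y - W) + det2 (Y - W) (Z - W)) with ht
  have ht0 : 0 < t := div_pos h1 hAB
  have ht1 : t < 1 := (div_lt_one hAB).2 (by linarith)
  set x0 : Plane := X + t • (Z - X) with hx0
  have hx00 : x0 0 = X 0 + t * (Z 0 - X 0) := by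
    rw [hx0]; simp [PiLp.add_apply, PiLp.smul_apply, PiLp.sub_apply]
  have hx01 : x0 1 = X 1 + t * (Z 1 - X 1) := by
    rw [hx0]; simp [PiLp.add_apply, PiLp.smul_apply, PiLp.sub_apply]
  have hline0 : det2 (Y - W) (x0 - W) =
      -(det2 (X - W) (Y - W)) + t * (det2 (X - W) (Y - W) + det2 (Y - W) (Z - W)) := by
    simp only [det2, PiLp.sub_apply]
    linear_combination (Y 0 - W 0) * hx01 - (Y 1 - W 1) * hx00
  have hline : det2 (Y - W) (x0 - W) = 0 := by
    rw [hline0, ht]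
    field_simp
    ring
  have hYW : Y - W ≠ 0 := by
    intro h
    have : det2 (X - W) (Y - W) = 0 := by
      have h1' : Y 0 - W 0 = 0 := by
        have := congrArg (fun v : Plane => v 0) h; simpa [PiLp.sub_apply] using this
      have h2' : Y 1 - W 1 = 0 := by
        have := congrArg (fun v : Plane => v 1) h; simpa [PiLp.sub_apply] using this
      simp only [det2, PiLp.sub_apply, h1', h2']; ring
    linarith
  obtain ⟨μ, hμ⟩ := collinear_of_det2 hline hYW
  have hm0 : x0 0 - W 0 = μ * (Y 0 - W 0) := by
    have := congrArg (fun v : Plane => v 0) hμ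
    simpa [PiLp.sub_apply, PiLp.smul_apply] using this
  have hm1 : x0 1 - W 1 = μ * (Y 1 - W 1) := by
    have := congrArg (fun v : Plane => v 1) hμ
    simpa [PiLp.sub_apply, PiLp.smul_apply] using this
  have hc0 : μ * (Y 0 - W 0) = (X 0 - W 0) + t * (Z 0 - X 0) := by
    rw [← hm0, hx00]; ring
  have hc1 : μ * (Y 1 - W 1) = (X 1 - W 1) + t * (Z 1 - X 1) := by
    rw [← hm1, hx01]; ring
  have hμA : μ * det2 (X - W) (Y - W) = t * det2 (X - W) (Z - W) := by
    simp only [det2, PiLp.sub_apply]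
    linear_combination (X 0 - W 0) * hc1 - (X 1 - W 1) * hc0
  have hμpos : 0 < μ := by nlinarith [mul_pos ht0 h2]
  have hK : (μ - 1) * det2 (X - W) (Y - W) = - t * det2 (Y - X) (Z - X) := by
    simp only [det2, PiLp.sub_apply]
    linear_combination (X 0 - Y 0) * hc1 - (X 1 - Y 1) * hc0
  have hμ1 : μ < 1 := by nlinarith [mul_pos ht0 h4]
  have hsegXZ : x0 ∈ segment ℝ X Z := by
    refine ⟨1 - t, t, by linarith, ht0.le, by ring, ?_⟩
    rw [hx0]; module
  have hsegWY : x0 ∈ segment ℝ W Y := by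
    refine ⟨1 - μ, μ, by linarith, hμpos.le, by ring, ?_⟩
    have hxw : x0 = W + μ • (Y - W) := by rw [← hμ]; abel
    rw [hxw]; module
  have dXZ : dist X x0 + dist x0 Z = dist X Z := dist_add_dist_of_mem_segment hsegXZ
  have dWY : dist W x0 + dist x0 Y = dist W Y := dist_add_dist_of_mem_segment hsegWY
  have hgval : det2 (X - W) (x0 - W) = t * det2 (X - W) (Z - W) := by
    simp only [det2, PiLp.sub_apply]
    linear_combination (X 0 - W 0) * hx01 - (X 1 - W 1) * hx00
  have strict1 : dist W X < dist W x0 + dist x0 X := by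
    rcases lt_or_eq_of_le (dist_triangle W x0 X) with h | h
    · exact h
    · exfalso
      have hW : Wbtw ℝ W x0 X := dist_add_dist_eq_iff.1 h.symm
      have hseg : x0 ∈ segment ℝ W X := hW.mem_segment
      have hz := det2_of_mem_segment hseg
      rw [hgval] at hz
      nlinarith [mul_pos ht0 h2]
  have strict2 : dist Y Z < dist Y x0 + dist x0 Z := by
    rcases lt_or_eq_of_le (dist_triangle Y x0 Z) with h | h
    · exact h
    · exfalso
      have hW : Wbtw ℝ Y x0 Z := dist_add_dist_eq_iff.1 h.symm
      have hseg : x0 ∈ segment ℝ Y Z := hW.mem_segment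
      have hz := det2_of_mem_segment hseg
      have hzval : det2 (Z - Y) (x0 - Y) = (1 - μ) * det2 (Y - W) (Z - W) := by
        simp only [det2, PiLp.sub_apply]
        linear_combination (Z 0 - Y 0) * hm1 - (Z 1 - Y 1) * hm0
      rw [hzval] at hz
      nlinarith
  have c1 : dist x0 X = dist X x0 := dist_comm _ _
  have c2 : dist x0 Y = dist Y x0 := dist_comm _ _
  linarith

section Runs
open scoped Classical

variable (c : ℕ → Plane) (n : ℕ)

noncomputable def Brk : Finset ℕ :=
  (Finset.range n).filter (fun t => t = 0 ∨ c t ≠ c (t - 1))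

def nruns : ℕ := (Brk c n).card

lemma mem_Brk {t : ℕ} : t ∈ Brk c n ↔ t < n ∧ (t = 0 ∨ c t ≠ c (t - 1)) := by
  simp [Brk]

lemma zero_mem_Brk (hn : 0 < n) : 0 ∈ Brk c n := (mem_Brk c n).2 ⟨hn, Or.inl rfl⟩

lemma nruns_pos (hn : 0 < n) : 0 < nruns c n :=
  Finset.card_pos.2 ⟨0, zero_mem_Brk c n hn⟩

noncomputable def dfun (k : ℕ) : ℕ :=
  if h : k < nruns c n then ((Brk c n).orderIsoOfFin rfl ⟨k, h⟩ : ℕ) else n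

lemma dfun_eq_of_lt {k : ℕ} (h : k < nruns c n) :
    dfun c n k = ((Brk c n).orderIsoOfFin rfl ⟨k, h⟩ : ℕ) := dif_pos h

lemma dfun_eq_of_ge {k : ℕ} (h : ¬ k < nruns c n) : dfun c n k = n := dif_neg h

lemma dfun_mem {k : ℕ} (h : k < nruns c n) : dfun c n k ∈ Brk c n := by
  rw [dfun_eq_of_lt c n h]
  exact ((Brk c n).orderIsoOfFin rfl ⟨k, h⟩).2

lemma dfun_lt {k : ℕ} (h : k < nruns c n) : dfun c n k < n :=
  Finset.mem_range.1 (Finset.mem_filter.1 (dfun_mem c n h)).1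

lemma dfun_le (k : ℕ) : dfun c n k ≤ n := by
  by_cases h : k < nruns c n
  · exact (dfun_lt c n h).le
  · rw [dfun_eq_of_ge c n h]

lemma dfun_lt_dfun {k l : ℕ} (hkl : k < l) (hl : l < nruns c n) :
    dfun c n k < dfun c n l := by
  have hk : k < nruns c n := hkl.trans hl
  rw [dfun_eq_of_lt c n hk, dfun_eq_of_lt c n hl]
  exact ((Brk c n).orderIsoOfFin rfl).strictMono (by exact hkl)

lemma dfun_succ_gt {k : ℕ} (h : k < nruns c n) : dfun c n k < dfun c n (k + 1) := by
  by_cases h' : k + 1 < nruns c n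
  · exact dfun_lt_dfun c n (Nat.lt_succ_self k) h'
  · rw [dfun_eq_of_ge c n h']
    exact dfun_lt c n h

lemma dfun_mono : Monotone (dfun c n) := by
  apply monotone_nat_of_le_succ
  intro k
  by_cases h : k < nruns c n
  · exact (dfun_succ_gt c n h).le
  · rw [dfun_eq_of_ge c n h, dfun_eq_of_ge c n (by omega)]

lemma dfun_zero (hn : 0 < n) : dfun c n 0 = 0 := by
  have h0 : 0 < nruns c n := nruns_pos c n hn
  have hmem := zero_mem_Brk c n hn
  obtain ⟨j, hj⟩ := ((Brk c n).orderIsoOfFin rfl).surjective ⟨0, hmem⟩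
  have hle : ((Brk c n).orderIsoOfFin rfl ⟨0, h0⟩ : ℕ) ≤ (((Brk c n).orderIsoOfFin rfl) j : ℕ) := by
    have hle' : (⟨0, h0⟩ : Fin (nruns c n)) ≤ j := by
      exact Nat.zero_le _
    exact ((Brk c n).orderIsoOfFin rfl).monotone hle'
  rw [hj] at hle
  rw [dfun_eq_of_lt c n h0]
  simpa using hle

lemma no_brk_inside {k t : ℕ} (hk : k < nruns c n) (ht : t ∈ Brk c n) :
    t ≤ dfun c n k ∨ dfun c n (k + 1) ≤ t := by
  obtain ⟨j, hj⟩ := ((Brk c n).orderIsoOfFin rfl).surjective ⟨t, ht⟩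
  have hjt : dfun c n (j : ℕ) = t := by
    rw [dfun_eq_of_lt c n j.2, Fin.eta, hj]
  by_cases hcase : (j : ℕ) ≤ k
  · left; rw [← hjt]; exact dfun_mono c n hcase
  · right; rw [← hjt]; exact dfun_mono c n (by omega)

lemma run_const {k : ℕ} (hk : k < nruns c n) :
    ∀ t, dfun c n k ≤ t → t < dfun c n (k + 1) → c t = c (dfun c n k) := by
  intro t ht
  induction t, ht using Nat.le_induction with
  | base => intro _; rfl
  | succ t ht ih =>
    intro hlt
    have hih := ih (by omega)
    have hnotmem : t + 1 ∉ Brk c n := by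
      intro hmem
      rcases no_brk_inside c n hk hmem with h | h <;> omega
    have htn : t + 1 < n := lt_of_lt_of_le hlt (dfun_le c n (k + 1))
    rw [mem_Brk] at hnotmem
    push_neg at hnotmem
    have := (hnotmem htn).2
    simp only [Nat.add_sub_cancel] at this
    rw [this]
    exact hih

lemma covers (hn : 0 < n) {t : ℕ} (ht : t < n) :
    ∃ k, k < nruns c n ∧ dfun c n k ≤ t ∧ t < dfun c n (k + 1) := by
  have h0 : 0 < nruns c n := nruns_pos c n hn
  have hFne : ((Finset.range (nruns c n)).filter (fun k => dfun c n k ≤ t)).Nonempty := by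
    refine ⟨0, ?_⟩
    rw [Finset.mem_filter, Finset.mem_range]
    exact ⟨h0, by rw [dfun_zero c n hn]; omega⟩
  obtain ⟨hk1, hk2⟩ := Finset.mem_filter.1 (Finset.max'_mem _ hFne)
  rw [Finset.mem_range] at hk1
  refine ⟨_, hk1, hk2, ?_⟩
  by_cases h' : Finset.max' _ hFne + 1 < nruns c n
  · by_contra hcon
    push_neg at hcon
    have hmem : Finset.max' _ hFne + 1 ∈
        (Finset.range (nruns c n)).filter (fun k => dfun c n k ≤ t) := by
      rw [Finset.mem_filter, Finset.mem_range]; exact ⟨h', hcon⟩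
    have := Finset.le_max' _ _ hmem
    omega
  · rw [dfun_eq_of_ge c n h']
    omega

lemma dfun_partial_sum (hn : 0 < n) :
    ∀ K, ∑ k ∈ Finset.range K, (dfun c n (k + 1) - dfun c n k) = dfun c n K := by
  intro K
  induction K with
  | zero => simp [dfun_zero c n hn]
  | succ K ih =>
    rw [Finset.sum_range_succ, ih]
    have h1 := dfun_mono c n (Nat.le_succ K)
    have h2 : dfun c n K.succ = dfun c n (K + 1) := rfl
    omega

lemma dfun_nruns : dfun c n (nruns c n) = n := dfun_eq_of_ge c n (lt_irrefl _)

lemma sum_lens (hn : 0 < n) :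
    ∑ k ∈ Finset.range (nruns c n), (dfun c n (k + 1) - dfun c n k) = n := by
  rw [dfun_partial_sum c n hn, dfun_nruns]

end Runs

section Helpers

lemma zmod_natCast_val {n : ℕ} [NeZero n] (i : ZMod n) : ((i.val : ℕ) : ZMod n) = i := by
  simp [ZMod.natCast_val, ZMod.cast_id]

lemma zmod_cast_inj {n : ℕ} [NeZero n] {s t : ℕ} (hs : s < n) (ht : t < n)
    (h : (s : ZMod n) = (t : ZMod n)) : s = t := by
  have h1 := ZMod.val_cast_of_lt hs
  have h2 := ZMod.val_cast_of_lt ht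
  rw [h] at h1
  omega

lemma det2_zero_left (v : Plane) : det2 0 v = 0 := by
  have h0 : (0 : Plane) 0 = 0 := rfl
  have h1 : (0 : Plane) 1 = 0 := rfl
  simp [det2, h0, h1]

lemma zmod_add_cancel {n : ℕ} [NeZero n] {i : ZMod n} {o : ℕ} (h : i + (o : ZMod n) = i) :
    (o : ZMod n) = 0 := by
  have h2 : i + (o : ZMod n) = i + 0 := by rw [add_zero]; exact h
  exact add_left_cancel h2

lemma inj_of_ccw {n : ℕ} [NeZero n] (hn : 3 ≤ n) {p : ZMod n → Plane}
    (hccw : CCWConvex p) : Function.Injective p := by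
  intro i j hij
  by_contra hne
  set o := (j - i).val with ho
  have hon : o < n := ZMod.val_lt _
  have ho0 : o ≠ 0 := by
    intro h
    apply hne
    have h2 := zmod_natCast_val (j - i)
    rw [← ho, h, Nat.cast_zero] at h2
    exact (sub_eq_zero.1 h2.symm).symm
  have hji : j = i + (o : ZMod n) := by
    have hr : i + (j - i) = j := by ring
    rw [ho, zmod_natCast_val]
    exact hr.symm
  have hn1 : 1 < n := by omega
  rcases eq_or_ne o 1 with h1 | h1
  · -- j = i + 1, use point i+2
    have hpj : p (i + 1) = p i := by
      rw [hji, h1, Nat.cast_one] at hij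
      exact hij.symm
    have hne0 : i + ((2 : ℕ) : ZMod n) ≠ i := by
      intro h
      exact zmod_cast_ne_zero (o := 2) (by omega) (by omega) (zmod_add_cancel h)
    have hne1 : i + ((2 : ℕ) : ZMod n) ≠ i + 1 := by
      intro h
      exact zmod_cast_ne_one (o := 2) hn1 (by omega) (by omega) (add_left_cancel h)
    have := hccw i (i + ((2 : ℕ) : ZMod n)) hne0 hne1
    rw [hpj, sub_self, det2_zero_left] at this
    exact lt_irrefl _ this
  · -- o ≥ 2
    have hne0 : i + (o : ZMod n) ≠ i := by
      intro h
      exact zmod_cast_ne_zero (o := o) (by omega) hon (zmod_add_cancel h)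
    have hne1 : i + (o : ZMod n) ≠ i + 1 := by
      intro h
      exact zmod_cast_ne_one (o := o) hn1 h1 hon (add_left_cancel h)
    have := hccw i (i + (o : ZMod n)) hne0 hne1
    rw [← hji, ← hij, sub_self, det2_zero_right] at this
    exact lt_irrefl _ this

lemma sum_two_pt {ι : Type*} [Fintype ι] [DecidableEq ι] (f g : ι → ℝ) (i j : ι)
    (hij : i ≠ j) (h : ∀ k, k ≠ i → k ≠ j → f k = g k) :
    ∑ k, f k - ∑ k, g k = (f i + f j) - (g i + g j) := by
  have hjmem : j ∈ (Finset.univ : Finset ι) := Finset.mem_univ j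
  have hi : i ∈ Finset.univ.erase j := Finset.mem_erase.2 ⟨hij, Finset.mem_univ i⟩
  rw [← Finset.sum_erase_add _ f hjmem, ← Finset.sum_erase_add _ g hjmem,
    ← Finset.sum_erase_add _ f hi, ← Finset.sum_erase_add _ g hi]
  have heq : ∑ k ∈ (Finset.univ.erase j).erase i, f k
      = ∑ k ∈ (Finset.univ.erase j).erase i, g k := by
    apply Finset.sum_congr rfl
    intro k hk
    rw [Finset.mem_erase, Finset.mem_erase] at hk
    exact h k hk.1 hk.2.1
  rw [heq]; ring

lemma sum_one_pt {ι : Type*} [Fintype ι] [DecidableEq ι] (f g : ι → ℝ) (i : ι)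
    (h : ∀ k, k ≠ i → f k = g k) :
    ∑ k, f k - ∑ k, g k = f i - g i := by
  have himem : i ∈ (Finset.univ : Finset ι) := Finset.mem_univ i
  rw [← Finset.sum_erase_add _ f himem, ← Finset.sum_erase_add _ g himem]
  have heq : ∑ k ∈ Finset.univ.erase i, f k = ∑ k ∈ Finset.univ.erase i, g k := by
    apply Finset.sum_congr rfl
    intro k hk
    exact h k (Finset.mem_erase.1 hk).1
  rw [heq]; ring

end Helpers
section Swap

lemma cross_swap {n : ℕ} [NeZero n] {p : ZMod n → Plane}
    (hpne : Function.Injective p)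
    {r : Plane → ℝ} {S : Set Plane}
    {a : ZMod n → Plane}
    (haS : ∀ i, a i ∈ S) (had : ∀ i, dist (p i) (a i) ≤ r (p i) + r (a i))
    (haself : ∀ i, p i ∈ S → a i = p i)
    (hamin : ∀ b : ZMod n → Plane,
      ((∀ i, b i ∈ S) ∧ (∀ i, dist (p i) (b i) ≤ r (p i) + r (b i)) ∧
        (∀ i, p i ∈ S → b i = p i)) →
      (∑ i, (dist (p i) (a i) - r (a i))) ≤ ∑ i, (dist (p i) (b i) - r (b i)))
    {s s' : Plane} (hs : s ∈ S) (hs' : s' ∈ S)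
    {i0 : ZMod n} (hpi0 : p i0 = s)
    {iY iQ : ZMod n} (hYQ : iY ≠ iQ) (hY0 : iY ≠ i0) (hQs' : p iQ ≠ s')
    (haY : a iY = s) (haQ : a iQ = s')
    (hquad : dist (p iY) s' + dist (p iQ) s < dist (p iY) s + dist (p iQ) s') : False := by
  classical
  have hYS : p iY ∉ S := by
    intro h
    have h1 := haself iY h
    rw [haY] at h1
    exact hY0 (hpne (by rw [← h1, hpi0]))
  have hQS : p iQ ∉ S := by
    intro h
    have h1 := haself iQ h
    rw [haQ] at h1
    exact hQs' h1.symm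
  have hdY := had iY
  rw [haY] at hdY
  have hdQ := had iQ
  rw [haQ] at hdQ
  by_cases hv1 : dist (p iY) s' ≤ r (p iY) + r s'
  · by_cases hv2 : dist (p iQ) s ≤ r (p iQ) + r s
    · -- double swap
      set b : ZMod n → Plane := Function.update (Function.update a iY s') iQ s with hb
      have hbY : b iY = s' := by
        rw [hb, Function.update_of_ne hYQ, Function.update_self]
      have hbQ : b iQ = s := by rw [hb, Function.update_self]
      have hbk : ∀ k, k ≠ iY → k ≠ iQ → b k = a k := by
        intro k h1 h2
        rw [hb, Function.update_of_ne h2, Function.update_of_ne h1]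
      have hprops : (∀ i, b i ∈ S) ∧ (∀ i, dist (p i) (b i) ≤ r (p i) + r (b i)) ∧
          (∀ i, p i ∈ S → b i = p i) := by
        refine ⟨?_, ?_, ?_⟩
        · intro k
          by_cases h1 : k = iY
          · rw [h1, hbY]; exact hs'
          · by_cases h2 : k = iQ
            · rw [h2, hbQ]; exact hs
            · rw [hbk k h1 h2]; exact haS k
        · intro k
          by_cases h1 : k = iY
          · rw [h1, hbY]; exact hv1
          · by_cases h2 : k = iQ
            · rw [h2, hbQ]; exact hv2
            · rw [hbk k h1 h2]; exact had k
        · intro k hk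
          by_cases h1 : k = iY
          · rw [h1] at hk; exact absurd hk hYS
          · by_cases h2 : k = iQ
            · rw [h2] at hk; exact absurd hk hQS
            · rw [hbk k h1 h2]; exact haself k hk
      have hle := hamin b hprops
      have hdiff := sum_two_pt (fun k => dist (p k) (b k) - r (b k))
        (fun k => dist (p k) (a k) - r (a k)) iY iQ hYQ
        (fun k h1 h2 => by simp only [hbk k h1 h2])
      simp only [hbY, hbQ, haY, haQ] at hdiff
      linarith
    · -- swap only iY → s'
      set b : ZMod n → Plane := Function.update a iY s' with hb
      have hbY : b iY = s' := by rw [hb, Function.update_self]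
      have hbk : ∀ k, k ≠ iY → b k = a k := by
        intro k h1
        rw [hb, Function.update_of_ne h1]
      have hprops : (∀ i, b i ∈ S) ∧ (∀ i, dist (p i) (b i) ≤ r (p i) + r (b i)) ∧
          (∀ i, p i ∈ S → b i = p i) := by
        refine ⟨?_, ?_, ?_⟩
        · intro k
          by_cases h1 : k = iY
          · rw [h1, hbY]; exact hs'
          · rw [hbk k h1]; exact haS k
        · intro k
          by_cases h1 : k = iY
          · rw [h1, hbY]; exact hv1
          · rw [hbk k h1]; exact had k
        · intro k hk
          by_cases h1 : k = iY
          · rw [h1] at hk; exact absurd hk hYS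
          · rw [hbk k h1]; exact haself k hk
      have hle := hamin b hprops
      have hdiff := sum_one_pt (fun k => dist (p k) (b k) - r (b k))
        (fun k => dist (p k) (a k) - r (a k)) iY
        (fun k h1 => by simp only [hbk k h1])
      simp only [hbY, haY] at hdiff
      push_neg at hv2
      linarith
  · -- swap only iQ → s ; first establish hv2
    have hv2 : dist (p iQ) s ≤ r (p iQ) + r s := by
      push_neg at hv1
      by_contra hv2
      push_neg at hv2
      linarith
    set b : ZMod n → Plane := Function.update a iQ s with hb
    have hbQ : b iQ = s := by rw [hb, Function.update_self]
    have hbk : ∀ k, k ≠ iQ → b k = a k := by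
      intro k h1
      rw [hb, Function.update_of_ne h1]
    have hprops : (∀ i, b i ∈ S) ∧ (∀ i, dist (p i) (b i) ≤ r (p i) + r (b i)) ∧
        (∀ i, p i ∈ S → b i = p i) := by
      refine ⟨?_, ?_, ?_⟩
      · intro k
        by_cases h1 : k = iQ
        · rw [h1, hbQ]; exact hs
        · rw [hbk k h1]; exact haS k
      · intro k
        by_cases h1 : k = iQ
        · rw [h1, hbQ]; exact hv2
        · rw [hbk k h1]; exact had k
      · intro k hk
        by_cases h1 : k = iQ
        · rw [h1] at hk; exact absurd hk hQS
        · rw [hbk k h1]; exact haself k hk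
    have hle := hamin b hprops
    have hdiff := sum_one_pt (fun k => dist (p k) (b k) - r (b k))
      (fun k => dist (p k) (a k) - r (a k)) iQ
      (fun k h1 => by simp only [hbk k h1])
    simp only [hbQ, haQ] at hdiff
    push_neg at hv1
    linarith

end Swap
section Sep

lemma cast_add_sub {n : ℕ} [NeZero n] (i0 : ZMod n) {o1 o2 : ℕ} (h : o1 ≤ o2) :
    i0 + (o1 : ZMod n) + ((o2 - o1 : ℕ) : ZMod n) = i0 + (o2 : ZMod n) := by
  rw [add_assoc, ← Nat.cast_add, Nat.add_sub_cancel' h]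

lemma cast_wrap {n : ℕ} [NeZero n] (i0 : ZMod n) {t2 t : ℕ} (h2 : t2 ≤ t + n) :
    i0 + (t2 : ZMod n) + ((t + n - t2 : ℕ) : ZMod n) = i0 + (t : ZMod n) := by
  rw [add_assoc, ← Nat.cast_add]
  have h3 : t2 + (t + n - t2) = t + n := by omega
  rw [h3, Nat.cast_add, ZMod.natCast_self, add_zero]

lemma zmod_add_ne {n : ℕ} [NeZero n] (i0 : ZMod n) {x y : ℕ} (hx : x < n) (hy : y < n)
    (hxy : x ≠ y) : i0 + (x : ZMod n) ≠ i0 + (y : ZMod n) := by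
  intro h
  exact hxy (zmod_cast_inj hx hy (add_left_cancel h))

lemma sep_groups {n : ℕ} [NeZero n] {p : ZMod n → Plane} (hccw : CCWConvex p)
    (hpne : Function.Injective p)
    {r : Plane → ℝ} {S : Set Plane}
    {a : ZMod n → Plane}
    (haS : ∀ i, a i ∈ S) (had : ∀ i, dist (p i) (a i) ≤ r (p i) + r (a i))
    (haself : ∀ i, p i ∈ S → a i = p i)
    (hamin : ∀ b : ZMod n → Plane,
      ((∀ i, b i ∈ S) ∧ (∀ i, dist (p i) (b i) ≤ r (p i) + r (b i)) ∧
        (∀ i, p i ∈ S → b i = p i)) →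
      (∑ i, (dist (p i) (a i) - r (a i))) ≤ ∑ i, (dist (p i) (b i) - r (b i)))
    {s s' : Plane} (hs : s ∈ S) (hs' : s' ∈ S) (hss' : s ≠ s')
    {i0 i1 : ZMod n} (hpi0 : p i0 = s) (hpi1 : p i1 = s') :
    LineSep {x | ∃ i, a i = s ∧ x = p i} {x | ∃ i, a i = s' ∧ x = p i} := by
  classical
  have hai0 : a i0 = s := by rw [haself i0 (hpi0 ▸ hs), hpi0]
  have hai1 : a i1 = s' := by rw [haself i1 (hpi1 ▸ hs'), hpi1]
  have hn : 0 < n := Nat.pos_of_ne_zero (NeZero.ne n)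
  have hi01 : i0 ≠ i1 := fun h => hss' (by rw [← hpi0, ← hpi1, h])
  have hn2 : 2 ≤ n := by
    by_contra h
    apply hi01
    have h1 := ZMod.val_lt i0
    have h2 := ZMod.val_lt i1
    exact ZMod.val_injective n (by omega)
  set J : Finset ℕ := (Finset.range n).filter (fun t => a (i0 + (t : ZMod n)) = s') with hJ
  have ht'J : (i1 - i0).val ∈ J := by
    rw [hJ, Finset.mem_filter, Finset.mem_range]
    refine ⟨ZMod.val_lt _, ?_⟩
    rw [zmod_natCast_val, (by ring : i0 + (i1 - i0) = i1), hai1]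
  have hJne : J.Nonempty := ⟨_, ht'J⟩
  set t1 := J.min' hJne with ht1d
  set t2 := J.max' hJne with ht2d
  have ht1J : t1 ∈ J := J.min'_mem hJne
  have ht2J : t2 ∈ J := J.max'_mem hJne
  have hmemJ : ∀ t ∈ J, t < n ∧ a (i0 + (t : ZMod n)) = s' := by
    intro t ht
    rw [hJ, Finset.mem_filter, Finset.mem_range] at ht
    exact ht
  have hinJ : ∀ t, t < n → a (i0 + (t : ZMod n)) = s' → t ∈ J := by
    intro t h1 h2
    rw [hJ, Finset.mem_filter, Finset.mem_range]
    exact ⟨h1, h2⟩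
  have h0J : ∀ t, t ∈ J → t ≠ 0 := by
    intro t ht h0
    have h' := (hmemJ t ht).2
    rw [h0, Nat.cast_zero, add_zero, hai0] at h'
    exact hss' h'
  have ht1pos : 0 < t1 := Nat.pos_of_ne_zero (h0J t1 ht1J)
  have ht12 : t1 ≤ t2 := J.min'_le _ ht2J
  have ht2n : t2 < n := (hmemJ t2 ht2J).1
  have hGmem : ∀ (s0 : Plane) (x : Plane), (∃ i, a i = s0 ∧ x = p i) →
      ∃ t, t < n ∧ a (i0 + (t : ZMod n)) = s0 ∧ x = p (i0 + (t : ZMod n)) := by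
    rintro s0 x ⟨i, hai, hx⟩
    refine ⟨(i - i0).val, ZMod.val_lt _, ?_, ?_⟩ <;>
      rw [zmod_natCast_val, (by ring : i0 + (i - i0) = i)] <;> assumption
  by_cases hcross : ∃ x, x < n ∧ a (i0 + (x : ZMod n)) = s ∧ t1 < x ∧ x < t2
  · exfalso
    obtain ⟨x, hxn, hax, ht1x, hxt2⟩ := hcross
    set t' := (i1 - i0).val with ht'd
    have ht'n : t' < n := ZMod.val_lt _
    have hit' : i0 + (t' : ZMod n) = i1 := by
      rw [ht'd, zmod_natCast_val]; ring
    have hat' : a (i0 + (t' : ZMod n)) = s' := by rw [hit', hai1]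
    have hpt' : p (i0 + (t' : ZMod n)) = s' := by rw [hit', hpi1]
    have ht'0 : 0 < t' := Nat.pos_of_ne_zero (h0J t' ht'J)
    have hxt' : x ≠ t' := by
      intro h
      rw [h, hat'] at hax
      exact hss' hax.symm
    rcases lt_or_gt_of_ne hxt' with hlt | hgt
    · -- x < t' : quadruple offsets (t1, x, t')
      have h1 := tri hccw i0 (o1 := t1) (o2 := x) ht1pos ht1x (by omega)
      have h2 := tri hccw i0 (o1 := t1) (o2 := t') ht1pos (by omega) (by omega)
      have h3 := tri hccw i0 (o1 := x) (o2 := t') (by omega) hlt (by omega)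
      have h4 := tri hccw (i0 + (t1 : ZMod n)) (o1 := x - t1) (o2 := t' - t1)
        (by omega) (by omega) (by omega)
      rw [cast_add_sub i0 (by omega : t1 ≤ x), cast_add_sub i0 (by omega : t1 ≤ t')] at h4
      have hq := quad (p i0) (p (i0 + (t1 : ZMod n))) (p (i0 + (x : ZMod n)))
        (p (i0 + (t' : ZMod n))) h1 h2 h3 h4
      refine cross_swap hpne haS had haself hamin hs hs' hpi0
        (iY := i0 + (x : ZMod n)) (iQ := i0 + (t1 : ZMod n))
        (zmod_add_ne i0 hxn (by omega) (by omega)) ?_ ?_ hax (hmemJ t1 ht1J).2 ?_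
      · intro h
        have h' : i0 + (x : ZMod n) = i0 + ((0 : ℕ) : ZMod n) := by
          rw [Nat.cast_zero, add_zero]; exact h
        exact absurd (zmod_cast_inj hxn hn (add_left_cancel h')) (by omega)
      · intro h
        rw [← hpt'] at h
        have := zmod_cast_inj (by omega : t1 < n) ht'n (add_left_cancel (hpne h))
        omega
      · rw [← hpi0, ← hpt']
        have c1 := dist_comm (p i0) (p (i0 + (t1 : ZMod n)))
        have c2 := dist_comm (p i0) (p (i0 + (x : ZMod n)))
        linarith
    · -- t' < x : quadruple offsets (t', x, t2)
      have h1 := tri hccw i0 (o1 := t') (o2 := x) ht'0 hgt (by omega)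
      have h2 := tri hccw i0 (o1 := t') (o2 := t2) ht'0 (by omega) (by omega)
      have h3 := tri hccw i0 (o1 := x) (o2 := t2) (by omega) hxt2 (by omega)
      have h4 := tri hccw (i0 + (t' : ZMod n)) (o1 := x - t') (o2 := t2 - t')
        (by omega) (by omega) (by omega)
      rw [cast_add_sub i0 (by omega : t' ≤ x), cast_add_sub i0 (by omega : t' ≤ t2)] at h4
      -- apply quad to (X, Y, Z, W) where X = P t', Y = P x, Z = P t2, W = p i0
      have h2' : 0 < det2 (p (i0 + (x : ZMod n)) - p (i0 + (t' : ZMod n)))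
          (p i0 - p (i0 + (t' : ZMod n))) := by
        rw [det2_sub_sub (p i0) (p (i0 + (t' : ZMod n))) (p (i0 + (x : ZMod n)))]
        exact h1
      have h3' : 0 < det2 (p (i0 + (t2 : ZMod n)) - p (i0 + (t' : ZMod n)))
          (p i0 - p (i0 + (t' : ZMod n))) := by
        rw [det2_sub_sub (p i0) (p (i0 + (t' : ZMod n))) (p (i0 + (t2 : ZMod n)))]
        exact h2
      have h4' : 0 < det2 (p (i0 + (t2 : ZMod n)) - p (i0 + (x : ZMod n)))
          (p i0 - p (i0 + (x : ZMod n))) := by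
        rw [det2_sub_sub (p i0) (p (i0 + (x : ZMod n))) (p (i0 + (t2 : ZMod n)))]
        exact h3
      have hq := quad (p (i0 + (t' : ZMod n))) (p (i0 + (x : ZMod n)))
        (p (i0 + (t2 : ZMod n))) (p i0) h4 h2' h3' h4'
      refine cross_swap hpne haS had haself hamin hs hs' hpi0
        (iY := i0 + (x : ZMod n)) (iQ := i0 + (t2 : ZMod n))
        (zmod_add_ne i0 hxn ht2n (by omega)) ?_ ?_ hax (hmemJ t2 ht2J).2 ?_
      · intro h
        have h' : i0 + (x : ZMod n) = i0 + ((0 : ℕ) : ZMod n) := by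
          rw [Nat.cast_zero, add_zero]; exact h
        exact absurd (zmod_cast_inj hxn hn (add_left_cancel h')) (by omega)
      · intro h
        rw [← hpt'] at h
        have := zmod_cast_inj ht2n ht'n (add_left_cancel (hpne h))
        omega
      · rw [← hpi0, ← hpt']
        have c1 := dist_comm (p (i0 + (x : ZMod n))) (p (i0 + (t' : ZMod n)))
        have c2 := dist_comm (p (i0 + (x : ZMod n))) (p i0)
        have c3 := dist_comm (p (i0 + (t2 : ZMod n))) (p (i0 + (t' : ZMod n)))
        linarith
  · -- separation case
    push_neg at hcross
    by_cases h12 : t1 = t2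
    · -- J is a singleton; support line at the vertex
      have hJsingle : ∀ t ∈ J, t = t1 := by
        intro t ht
        have := J.min'_le t ht
        have := J.le_max' t ht
        omega
      set β : ZMod n := i0 + (t1 : ZMod n) with hβ
      have hβ1 : β + 1 ≠ β := by
        intro h
        have h' : β + 1 = β + 0 := by rw [add_zero]; exact h
        have h1 := add_left_cancel h'
        have h2 := ZMod.val_cast_of_lt (show 1 < n by omega)
        rw [Nat.cast_one] at h2
        rw [h1] at h2
        simp at h2
      have hne : p (β + 1) ≠ p β := fun h => hβ1 (hpne h)
      refine ⟨- detL (p (β + 1) - p β), neg_ne_zero.2 (detL_ne_zero (sub_ne_zero.2 hne)),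
        - detL (p (β + 1) - p β) (p β), ?_, ?_⟩
      · rintro y hy
        obtain ⟨t, htn, hat, hy'⟩ := hGmem s y hy
        simp only [LinearMap.neg_apply, neg_le_neg_iff]
        rw [hy']
        -- show detL e (p β) ≤ detL e (p (i0 + t))
        have key : ∀ k : ZMod n, detL (p (β + 1) - p β) (p β) ≤ detL (p (β + 1) - p β) (p k) := by
          intro k
          by_cases hk1 : k = β
          · rw [hk1]
          · by_cases hk2 : k = β + 1
            · rw [hk2]
              have : detL (p (β + 1) - p β) (p (β + 1)) - detL (p (β + 1) - p β) (p β)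
                  = det2 (p (β + 1) - p β) (p (β + 1) - p β) := by
                rw [← map_sub]; rfl
              rw [det2_self] at this
              linarith
            · have := hccw β k hk1 hk2
              have h' : detL (p (β + 1) - p β) (p k) - detL (p (β + 1) - p β) (p β)
                  = det2 (p (β + 1) - p β) (p k - p β) := by
                rw [← map_sub]; rfl
              linarith
        exact key _
      · rintro y hy
        obtain ⟨t, htn, hat, hy'⟩ := hGmem s' y hy
        have ht1 : t = t1 := hJsingle t (hinJ t htn hat)
        simp only [LinearMap.neg_apply, neg_le_neg_iff]
        rw [hy', ht1, ← hβ]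
    · -- t1 < t2
      have ht1t2 : t1 < t2 := by omega
      set P1 : Plane := p (i0 + (t1 : ZMod n)) with hP1
      set P2 : Plane := p (i0 + (t2 : ZMod n)) with hP2
      have hP12 : P2 - P1 ≠ 0 := by
        rw [sub_ne_zero, hP1, hP2]
        intro h
        exact absurd (zmod_cast_inj ht2n (by omega) (add_left_cancel (hpne h))) (by omega)
      refine ⟨- detL (P2 - P1), neg_ne_zero.2 (detL_ne_zero hP12), - detL (P2 - P1) P1, ?_, ?_⟩
      · -- group of s : detL (P2 - P1) P1 ≤ detL (P2 - P1) x
        rintro y hy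
        obtain ⟨t, htn, hat, hy'⟩ := hGmem s y hy
        simp only [LinearMap.neg_apply, neg_le_neg_iff]
        rw [hy']
        have htJ : t ∉ J := by
          intro h
          have := (hmemJ t h).2
          rw [this] at hat
          exact hss' hat.symm
        have htne1 : t ≠ t1 := fun h => htJ (h ▸ ht1J)
        have htne2 : t ≠ t2 := fun h => htJ (h ▸ ht2J)
        have hout : t < t1 ∨ t2 < t := by
          by_contra hc
          push_neg at hc
          have h5 := hcross t htn hat (by omega)
          omega
        have hdiff : detL (P2 - P1) (p (i0 + (t : ZMod n))) - detL (P2 - P1) P1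
            = det2 (P2 - P1) (p (i0 + (t : ZMod n)) - P1) := by
          rw [← map_sub]; rfl
        have hpos : 0 < det2 (P2 - P1) (p (i0 + (t : ZMod n)) - P1) := by
          rw [hP1, hP2, ← det2_sub_sub (p (i0 + (t1 : ZMod n))) (p (i0 + (t2 : ZMod n)))
            (p (i0 + (t : ZMod n)))]
          rcases hout with hc1 | hc2
          · -- t < t1 : base t2, offsets t + n - t2 < t1 + n - t2
            have htri := tri hccw (i0 + (t2 : ZMod n)) (o1 := t + n - t2) (o2 := t1 + n - t2)
              (by omega) (by omega) (by omega)
            rw [cast_wrap i0 (by omega : t2 ≤ t + n), cast_wrap i0 (by omega : t2 ≤ t1 + n)] at htri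
            exact htri
          · -- t2 < t : base t2, offsets t - t2 < t1 + n - t2
            have htri := tri hccw (i0 + (t2 : ZMod n)) (o1 := t - t2) (o2 := t1 + n - t2)
              (by omega) (by omega) (by omega)
            rw [cast_add_sub i0 (by omega : t2 ≤ t), cast_wrap i0 (by omega : t2 ≤ t1 + n)] at htri
            exact htri
        linarith
      · -- group of s' : detL (P2 - P1) y ≤ detL (P2 - P1) P1
        rintro y hy
        obtain ⟨t, htn, hat, hy'⟩ := hGmem s' y hy
        simp only [LinearMap.neg_apply, neg_le_neg_iff]
        rw [hy']
        have htJ : t ∈ J := hinJ t htn hat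
        have hle1 : t1 ≤ t := J.min'_le t htJ
        have hle2 : t ≤ t2 := J.le_max' t htJ
        rcases eq_or_lt_of_le hle1 with he1 | hlt1
        · rw [← he1, ← hP1]
        · rcases eq_or_lt_of_le hle2 with he2 | hlt2
          · rw [he2, ← hP2]
            have hdiff : detL (P2 - P1) P2 - detL (P2 - P1) P1
                = det2 (P2 - P1) (P2 - P1) := by rw [← map_sub]; rfl
            rw [det2_self] at hdiff
            linarith
          · have hdiff : detL (P2 - P1) (p (i0 + (t : ZMod n))) - detL (P2 - P1) P1
                = det2 (P2 - P1) (p (i0 + (t : ZMod n)) - P1) := by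
              rw [← map_sub]; rfl
            have htri := tri hccw (i0 + (t1 : ZMod n)) (o1 := t - t1) (o2 := t2 - t1)
              (by omega) (by omega) (by omega)
            rw [cast_add_sub i0 (by omega : t1 ≤ t), cast_add_sub i0 (by omega : t1 ≤ t2)] at htri
            rw [← hP1, ← hP2] at htri
            have hswap := det2_swap (P2 - P1) (p (i0 + (t : ZMod n)) - P1)
            linarith

end Sep
/-- `S` is a dominating set of the disk graph on the points `p 0, …, p (n-1)` with
radii `r`: `S` is a set of these points, and the disk of every point intersects the
disk of some point of `S`. -/
def IsDominating {n : ℕ} (p : ZMod n → Plane) (r : Plane → ℝ) (S : Set Plane) : Prop :=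
  S ⊆ Set.range p ∧ ∀ q ∈ Set.range p, ∃ s ∈ S, dist q s ≤ r q + r s

/-- A partition of the cyclic point sequence `p 0, …, p (n-1)` into `m` nonempty
contiguous sublists `α_0, …, α_{m-1}` listed counterclockwise: the sublist `α_j`
consists of the `len j` consecutive points starting at cyclic position
`start + (sum of the lengths of the sublists before j)`. -/
structure SublistPartition (n m : ℕ) [NeZero m] where
  start : ZMod n
  len : ZMod m → ℕ
  len_pos : ∀ j, 0 < len j
  len_sum : ∑ j, len j = n

variable {n m : ℕ} [NeZero m]

/-- The cyclic position offset at which the sublist `α_j` starts. -/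
def SublistPartition.offset (A : SublistPartition n m) (j : ZMod m) : ℕ :=
  ∑ j' ∈ Finset.univ.filter (fun j' : ZMod m => j'.val < j.val), A.len j'

/-- The set of points of the sublist `α_j`. -/
def SublistPartition.block (A : SublistPartition n m) (p : ZMod n → Plane)
    (j : ZMod m) : Set Plane :=
  (fun t : ℕ => p (A.start + (A.offset j : ZMod n) + (t : ZMod n))) '' Set.Iio (A.len j)

/-- The group `𝒜_s` of a center `s`: the points of all sublists assigned to `s`. -/
def group (A : SublistPartition n m) (p : ZMod n → Plane) (φ : ZMod m → Plane)
    (s : Plane) : Set Plane :=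
  {x | ∃ j, φ j = s ∧ x ∈ A.block p j}

/-- `φ` is an assignment of the sublists of the partition `A` to points of `S`:
each sublist `α_j` is assigned a point `φ j ∈ S` whose disk intersects the disk
of every point of `α_j`. -/
def IsAssignment (A : SublistPartition n m) (p : ZMod n → Plane) (r : Plane → ℝ)
    (S : Set Plane) (φ : ZMod m → Plane) : Prop :=
  (∀ j, φ j ∈ S) ∧ ∀ j, ∀ x ∈ A.block p j, dist x (φ j) ≤ r x + r (φ j)

/-- A Lemma-3.1 assignment: an assignment that is line-separable, such that
(1) every `s ∈ S` lies in one of its own sublists (its main sublist), and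
(2) cyclically adjacent sublists are assigned to different points of `S`. -/
def IsLemma31Assignment (A : SublistPartition n m) (p : ZMod n → Plane) (r : Plane → ℝ)
    (S : Set Plane) (φ : ZMod m → Plane) : Prop :=
  IsAssignment A p r S φ ∧
  (∀ s ∈ S, ∀ s' ∈ S, s ≠ s' → LineSep (group A p φ s) (group A p φ s')) ∧
  (∀ s ∈ S, ∃ j, φ j = s ∧ s ∈ A.block p j) ∧
  (∀ j : ZMod m, j + 1 ≠ j → φ (j + 1) ≠ φ j)

lemma zmod_sum_val {m : ℕ} [NeZero m] {M : Type*} [AddCommMonoid M] (f : ℕ → M) :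
    ∑ j : ZMod m, f (ZMod.val j) = ∑ k ∈ Finset.range m, f k := by
  apply Finset.sum_nbij' (i := fun (j : ZMod m) => j.val) (j := fun k => (k : ZMod m))
  · intro a _; exact Finset.mem_range.2 (ZMod.val_lt a)
  · intro k _; exact Finset.mem_univ _
  · intro a _; simp [ZMod.natCast_val, ZMod.cast_id]
  · intro k hk; exact ZMod.val_cast_of_lt (Finset.mem_range.1 hk)
  · intro a _; rfl

lemma zmod_sum_filter_val {m : ℕ} [NeZero m] {M : Type*} [AddCommMonoid M] (f : ℕ → M)
    (j : ZMod m) :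
    ∑ j' ∈ Finset.univ.filter (fun j' : ZMod m => j'.val < j.val), f (ZMod.val j')
      = ∑ k ∈ Finset.range j.val, f k := by
  apply Finset.sum_nbij' (i := fun (j' : ZMod m) => j'.val) (j := fun k => (k : ZMod m))
  · intro a ha
    exact Finset.mem_range.2 (by simpa using (Finset.mem_filter.1 ha).2)
  · intro k hk
    rw [Finset.mem_filter]
    refine ⟨Finset.mem_univ _, ?_⟩
    have hk' := Finset.mem_range.1 hk
    have hkm : k < m := lt_of_lt_of_le hk' (le_of_lt (ZMod.val_lt j))
    simp [ZMod.val_cast_of_lt hkm, hk']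
  · intro a _; simp [ZMod.natCast_val, ZMod.cast_id]
  · intro k hk
    have hk' := Finset.mem_range.1 hk
    exact ZMod.val_cast_of_lt (lt_of_lt_of_le hk' (le_of_lt (ZMod.val_lt j)))
  · intro a _; rfl

lemma singleton_case {n : ℕ} [NeZero n] (p : ZMod n → Plane) (r : Plane → ℝ)
    (S : Set Plane) (hS : IsDominating p r S) {s : Plane} (hsS : s ∈ S)
    (hsing : ∀ s1 ∈ S, ∀ s2 ∈ S, s1 = s2) :
    ∃ m : ℕ, ∃ _ : NeZero m, ∃ A : SublistPartition n m, ∃ φ : ZMod m → Plane,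
      IsLemma31Assignment A p r S φ := by
  have hn : 0 < n := Nat.pos_of_ne_zero (NeZero.ne n)
  refine ⟨1, ⟨one_ne_zero⟩, ⟨0, fun _ => n, fun _ => hn, by simp⟩, fun _ => s,
    ⟨⟨fun _ => hsS, ?_⟩, ?_, ?_, ?_⟩⟩
  · rintro j x ⟨t, ht, rfl⟩
    obtain ⟨s'', hs''S, hd⟩ := hS.2 _ ⟨_, rfl⟩
    rwa [hsing s'' hs''S s hsS] at hd
  · intro s1 hs1 s2 hs2 hne
    exact absurd (hsing s1 hs1 s2 hs2) hne
  · intro s0 hs0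
    obtain ⟨i, hi⟩ := hS.1 hs0
    have hs0s : s0 = s := hsing s0 hs0 s hsS
    refine ⟨0, hs0s.symm, ⟨i.val, ZMod.val_lt i, ?_⟩⟩
    have hoff : (⟨0, fun _ => n, fun _ => hn, by simp⟩ : SublistPartition n 1).offset 0 = 0 := by
      simp [SublistPartition.offset]
    rw [hoff]
    simpa [zmod_natCast_val] using hi
  · intro j hj
    exact absurd (Subsingleton.elim (j + 1) j) hj
theorem line_separable_property {n : ℕ} [NeZero n]
    (p : ZMod n → Plane) (hccw : CCWConvex p)
    (r : Plane → ℝ) (hr : ∀ i, 0 ≤ r (p i))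
    (S : Set Plane) (hS : IsDominating p r S)
    (hmin : ∀ T : Set Plane, IsDominating p r T → S.ncard ≤ T.ncard) :
    ∃ m : ℕ, ∃ _ : NeZero m, ∃ A : SublistPartition n m, ∃ φ : ZMod m → Plane,
      IsLemma31Assignment A p r S φ := by
  classical
  have hn : 0 < n := Nat.pos_of_ne_zero (NeZero.ne n)
  obtain ⟨s0, hs0S, -⟩ := hS.2 (p 0) ⟨0, rfl⟩
  by_cases hsing : ∀ s1 ∈ S, ∀ s2 ∈ S, s1 = s2
  · exact singleton_case p r S hS hs0S hsing
  push_neg at hsing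
  obtain ⟨s1, hs1S, s2, hs2S, hs12⟩ := hsing
  have hpinj : Function.Injective p := by
    rcases le_or_gt 3 n with h3 | h3
    · exact inj_of_ccw h3 hccw
    · intro i j hij
      by_contra hne
      have hvne : i.val ≠ j.val := fun h => hne (ZMod.val_injective n h)
      have hiv := ZMod.val_lt i
      have hjv := ZMod.val_lt j
      have hall : ∀ k : ZMod n, p k = p i := by
        intro k
        have hkv := ZMod.val_lt k
        have hh : k.val = i.val ∨ k.val = j.val := by omega
        rcases hh with h | h
        · rw [ZMod.val_injective n h]
        · rw [ZMod.val_injective n h, hij]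
      obtain ⟨ia, hia⟩ := hS.1 hs1S
      obtain ⟨ib, hib⟩ := hS.1 hs2S
      exact hs12 (by rw [← hia, ← hib, hall ia, hall ib])
  set V : Set (ZMod n → Plane) :=
    {b | (∀ i, b i ∈ S) ∧ (∀ i, dist (p i) (b i) ≤ r (p i) + r (b i)) ∧
      (∀ i, p i ∈ S → b i = p i)} with hV
  have hSfin : S.Finite := Set.Finite.subset (Set.finite_range p) hS.1
  have hVfin : V.Finite := by
    apply Set.Finite.subset (Set.Finite.pi (fun _ : ZMod n => hSfin))
    intro b hb
    rw [Set.mem_pi]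
    intro i _
    exact hb.1 i
  have hVne : V.Nonempty := by
    refine ⟨fun i => if h : p i ∈ S then p i
      else Classical.choose (hS.2 (p i) ⟨i, rfl⟩), ?_, ?_, ?_⟩
    · intro i
      by_cases h : p i ∈ S
      · simp only [dif_pos h]; exact h
      · simp only [dif_neg h]; exact (Classical.choose_spec (hS.2 (p i) ⟨i, rfl⟩)).1
    · intro i
      by_cases h : p i ∈ S
      · simp only [dif_pos h, dist_self]
        have := hr i; linarith
      · simp only [dif_neg h]; exact (Classical.choose_spec (hS.2 (p i) ⟨i, rfl⟩)).2
    · intro i h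
      simp only [dif_pos h]
  obtain ⟨a, haV, hamin'⟩ := Set.exists_min_image V
    (fun b => ∑ i, (dist (p i) (b i) - r (b i))) hVfin hVne
  obtain ⟨haS, had, haself⟩ := haV
  have hamin : ∀ b : ZMod n → Plane,
      ((∀ i, b i ∈ S) ∧ (∀ i, dist (p i) (b i) ≤ r (p i) + r (b i)) ∧
        (∀ i, p i ∈ S → b i = p i)) →
      (∑ i, (dist (p i) (a i) - r (a i))) ≤ ∑ i, (dist (p i) (b i) - r (b i)) :=
    fun b hb => hamin' b hb
  obtain ⟨ia, hia⟩ := hS.1 hs1S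
  obtain ⟨ib, hib⟩ := hS.1 hs2S
  have haia : a ia = s1 := by rw [haself ia (by rw [hia]; exact hs1S), hia]
  have haib : a ib = s2 := by rw [haself ib (by rw [hib]; exact hs2S), hib]
  have hstart : ∃ k : ZMod n, a (k + 1) ≠ a k := by
    by_contra hcon
    push_neg at hcon
    have hconst : ∀ (t : ℕ) (i : ZMod n), a (i + (t : ZMod n)) = a i := by
      intro t
      induction t with
      | zero => intro i; simp
      | succ t ih =>
        intro i
        have hcast : i + ((t + 1 : ℕ) : ZMod n) = (i + (t : ZMod n)) + 1 := by
          push_cast; ring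
        rw [hcast, hcon (i + (t : ZMod n)), ih i]
    apply hs12
    have h1 : a (ia + (((ib - ia).val : ℕ) : ZMod n)) = a ia := hconst _ ia
    rw [zmod_natCast_val, (by ring : ia + (ib - ia) = ib)] at h1
    rw [← haia, ← haib, h1]
  obtain ⟨k0, hk0⟩ := hstart
  set c : ℕ → Plane := fun t => a ((k0 + 1) + (t : ZMod n)) with hcdef
  have hcwrap : c 0 ≠ c (n - 1) := by
    have h1 : c 0 = a (k0 + 1) := by rw [hcdef]; simp
    have hm1 : ((n - 1 : ℕ) : ZMod n) = - 1 := by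
      have h2 : ((n - 1 : ℕ) : ZMod n) + 1 = 0 := by
        have h3 : ((n - 1 + 1 : ℕ) : ZMod n) = 0 := by
          rw [(by omega : n - 1 + 1 = n), ZMod.natCast_self]
        rw [Nat.cast_add, Nat.cast_one] at h3
        exact h3
      exact eq_neg_of_add_eq_zero_left h2
    have h2 : c (n - 1) = a k0 := by
      show a ((k0 + 1) + ((n - 1 : ℕ) : ZMod n)) = a k0
      rw [hm1]
      congr 1
      ring
    rw [h1, h2]
    exact hk0
  set m := nruns c n with hmdef
  haveI hNZ : NeZero m := ⟨(nruns_pos c n hn).ne'⟩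
  have hlen_pos : ∀ j : ZMod m, 0 < dfun c n (j.val + 1) - dfun c n j.val := by
    intro j
    have := dfun_succ_gt c n (show j.val < nruns c n from ZMod.val_lt j)
    omega
  have hlen_sum : ∑ j : ZMod m, (dfun c n (j.val + 1) - dfun c n j.val) = n := by
    rw [zmod_sum_val (fun k => dfun c n (k + 1) - dfun c n k)]
    exact sum_lens c n hn
  set A : SublistPartition n m :=
    ⟨k0 + 1, fun j => dfun c n (j.val + 1) - dfun c n j.val, hlen_pos, hlen_sum⟩ with hA
  set φ : ZMod m → Plane := fun j => c (dfun c n j.val) with hφ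
  have hoffset : ∀ j : ZMod m, A.offset j = dfun c n j.val := by
    intro j
    show ∑ j' ∈ Finset.univ.filter (fun j' : ZMod m => j'.val < j.val),
        (dfun c n (j'.val + 1) - dfun c n j'.val) = dfun c n j.val
    rw [zmod_sum_filter_val (fun k => dfun c n (k + 1) - dfun c n k) j]
    exact dfun_partial_sum c n hn j.val
  have haux : ∀ (j : ZMod m) (t' : ℕ), A.start + (A.offset j : ZMod n) + (t' : ZMod n)
      = (k0 + 1) + ((dfun c n j.val + t' : ℕ) : ZMod n) := by
    intro j t'
    have h1 : A.start = k0 + 1 := rfl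
    rw [h1, hoffset j, Nat.cast_add]
    ring
  have hblock : ∀ (j : ZMod m) (x : Plane), x ∈ A.block p j ↔
      ∃ t', t' < dfun c n (j.val + 1) - dfun c n j.val ∧
        x = p ((k0 + 1) + ((dfun c n j.val + t' : ℕ) : ZMod n)) := by
    intro j x
    constructor
    · rintro ⟨t', ht', rfl⟩
      refine ⟨t', ht', ?_⟩
      show p (A.start + (A.offset j : ZMod n) + (t' : ZMod n))
          = p ((k0 + 1) + ((dfun c n j.val + t' : ℕ) : ZMod n))
      rw [haux j t']
    · rintro ⟨t', ht', rfl⟩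
      refine ⟨t', ht', ?_⟩
      show p (A.start + (A.offset j : ZMod n) + (t' : ZMod n))
          = p ((k0 + 1) + ((dfun c n j.val + t' : ℕ) : ZMod n))
      rw [haux j t']
  have hrunval : ∀ (j : ZMod m) (t' : ℕ), t' < dfun c n (j.val + 1) - dfun c n j.val →
      a ((k0 + 1) + ((dfun c n j.val + t' : ℕ) : ZMod n)) = φ j := by
    intro j t' ht'
    have hjlt : j.val < nruns c n := ZMod.val_lt j
    have hrc := run_const c n hjlt (dfun c n j.val + t') (by omega) (by omega)
    show c (dfun c n j.val + t') = φ j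
    rw [hrc, hφ]
  have hgroup : ∀ s' : Plane, group A p φ s' = {x | ∃ i, a i = s' ∧ x = p i} := by
    intro s'
    ext x
    constructor
    · rintro ⟨j, hφj, hxb⟩
      obtain ⟨t', ht', hx⟩ := (hblock j x).1 hxb
      exact ⟨_, by rw [hrunval j t' ht', hφj], hx⟩
    · rintro ⟨i, hai, hx⟩
      have htn : (i - (k0 + 1)).val < n := ZMod.val_lt _
      obtain ⟨k, hk, hk1, hk2⟩ := covers c n hn htn
      have hit : (k0 + 1) + (((i - (k0 + 1)).val : ℕ) : ZMod n) = i := by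
        rw [zmod_natCast_val]; ring
      have hv : ((k : ZMod m)).val = k := ZMod.val_cast_of_lt hk
      refine ⟨(k : ZMod m), ?_, (hblock _ x).2
        ⟨(i - (k0 + 1)).val - dfun c n k, by rw [hv]; omega, ?_⟩⟩
      · have hrc := run_const c n hk ((i - (k0 + 1)).val) hk1 hk2
        rw [hφ]
        simp only [hv]
        rw [← hrc]
        show a ((k0 + 1) + (((i - (k0 + 1)).val : ℕ) : ZMod n)) = s'
        rw [hit, hai]
      · rw [hx]
        congr 1
        rw [hv, (by omega : dfun c n k + ((i - (k0 + 1)).val - dfun c n k)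
          = (i - (k0 + 1)).val), hit]
  refine ⟨m, hNZ, A, φ, ⟨⟨?_, ?_⟩, ?_, ?_, ?_⟩⟩
  · intro j
    exact haS _
  · intro j x hx
    obtain ⟨t', ht', hxe⟩ := (hblock j x).1 hx
    have hd := had ((k0 + 1) + ((dfun c n j.val + t' : ℕ) : ZMod n))
    rw [hrunval j t' ht'] at hd
    rw [hxe]
    exact hd
  · intro s hsm s' hs'm hne
    rw [hgroup s, hgroup s']
    obtain ⟨i0, hpi0⟩ := hS.1 hsm
    obtain ⟨i1, hpi1⟩ := hS.1 hs'm
    exact sep_groups hccw hpinj haS had haself hamin hsm hs'm hne hpi0 hpi1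
  · intro s hsm
    obtain ⟨i0, hpi0⟩ := hS.1 hsm
    have hai0 : a i0 = s := by rw [haself i0 (by rw [hpi0]; exact hsm), hpi0]
    have hmem : s ∈ group A p φ s := by
      rw [hgroup]
      exact ⟨i0, hai0, hpi0.symm⟩
    exact hmem
  · intro j hj1 heq
    have hm2 : 2 ≤ m := by
      by_contra h
      have hm1 : m = 1 := by
        have := (nruns_pos c n hn)
        omega
      apply hj1
      apply ZMod.val_injective
      have h1 := ZMod.val_lt (j + 1)
      have h2 := ZMod.val_lt j
      omega
    have hjval : (j + 1).val = (j.val + 1) % m := by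
      have h1 : j + 1 = ((j.val + 1 : ℕ) : ZMod m) := by
        rw [Nat.cast_add, Nat.cast_one, zmod_natCast_val]
      rw [h1, ZMod.val_natCast]
    by_cases hjm : j.val + 1 < m
    · have hv2 : (j + 1).val = j.val + 1 := by rw [hjval, Nat.mod_eq_of_lt hjm]
      have hdmem := dfun_mem c n (show j.val + 1 < nruns c n from hjm)
      rw [mem_Brk] at hdmem
      have hd0 : 0 < dfun c n (j.val + 1) := by
        have h5 := dfun_lt_dfun c n (show 0 < j.val + 1 by omega) hjm
        rw [dfun_zero c n hn] at h5
        omega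
      have hne' : c (dfun c n (j.val + 1)) ≠ c (dfun c n (j.val + 1) - 1) := by
        rcases hdmem.2 with h | h
        · omega
        · exact h
      have hsg := dfun_succ_gt c n (show j.val < nruns c n from ZMod.val_lt j)
      have hrc := run_const c n (show j.val < nruns c n from ZMod.val_lt j)
        (dfun c n (j.val + 1) - 1) (by omega) (by omega)
      apply hne'
      calc c (dfun c n (j.val + 1)) = φ (j + 1) := by rw [hφ]; simp only [hv2]
        _ = φ j := heq
        _ = c (dfun c n j.val) := by rw [hφ]
        _ = c (dfun c n (j.val + 1) - 1) := hrc.symm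
    · have hveq : j.val + 1 = m := by
        have := ZMod.val_lt j
        omega
      have hv2 : (j + 1).val = 0 := by rw [hjval, hveq, Nat.mod_self]
      have hdlt := dfun_lt c n (show j.val < nruns c n from ZMod.val_lt j)
      have hdn : dfun c n (j.val + 1) = n := by
        rw [hveq]
        exact dfun_nruns c n
      have hrc := run_const c n (show j.val < nruns c n from ZMod.val_lt j)
        (n - 1) (by omega) (by omega)
      apply hcwrap
      calc c 0 = c (dfun c n 0) := by rw [dfun_zero c n hn]
        _ = φ (j + 1) := by rw [hφ]; simp only [hv2]
        _ = φ j := heq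
        _ = c (dfun c n j.val) := by rw [hφ]
        _ = c (n - 1) := hrc.symm


end
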